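/- Let q be a prime power and let integers satisfy 1 ≤ u_1 < k and 1 ≤ t. Set n = t(q^k - 1)/(q - 1) - (q^{u_1} - 1)/(q - 1) and d = t·q^{k-1} - q^{u_1 - 1}. Then there exists an [n,k]_q linear code C with minimum Hamming distance d such that for every 1 ≤ r ≤ k, the number of integers j with A_j^r(C) ≠ 0 is at most min{u_1 + 1, r + 1, k - r + 1, k - u_1 + 1}. -/
import Mathlib


open Finset

/-- The Hamming weight of a vector. -/
noncomputable def hwt {F : Type} [Zero F] {n : ℕ} (c : Fin n → F) : ℕ :=
  Nat.card {i : Fin n // c i ≠ 0}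

/-- The subcode support weight of a subspace of `F^n`. -/
noncomputable def suppWt {F : Type} [Field F] {n : ℕ} (X : Submodule F (Fin n → F)) : ℕ :=
  Nat.card {i : Fin n // ∃ x ∈ X, x i ≠ 0}

/-- The minimum Hamming distance of a linear code. -/
noncomputable def minDist {F : Type} [Field F] {n : ℕ} (C : Submodule F (Fin n → F)) : ℕ :=
  sInf {w | ∃ c ∈ C, c ≠ 0 ∧ hwt c = w}

/-- The `r`-th generalized Hamming weight of a linear code. -/
noncomputable def ghw {F : Type} [Field F] {n : ℕ} (C : Submodule F (Fin n → F)) (r : ℕ) : ℕ :=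
  sInf {w | ∃ U : Submodule F (Fin n → F), U ≤ C ∧ Module.finrank F ↥U = r ∧ suppWt U = w}

/-- `sswd C r j` = the number of `r`-dimensional subspaces `U` of `C` with support weight `j`. -/
noncomputable def sswd {F : Type} [Field F] {n : ℕ} (C : Submodule F (Fin n → F)) (r j : ℕ) : ℕ :=
  Nat.card {U : Submodule F (Fin n → F) // U ≤ C ∧ Module.finrank F ↥U = r ∧ suppWt U = j}

/-- `wdist C j` = the number of codewords of `C` of Hamming weight `j`. -/
noncomputable def wdist {F : Type} [Field F] {n : ℕ} (C : Submodule F (Fin n → F)) (j : ℕ) : ℕ :=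
  Nat.card {c : Fin n → F // c ∈ C ∧ hwt c = j}

/-- The q-ary Gaussian binomial coefficient `[k choose r]_q`. -/
def gbinom (q k r : ℕ) : ℕ :=
  (∏ i ∈ Finset.range r, (q ^ k - q ^ i)) / (∏ i ∈ Finset.range r, (q ^ r - q ^ i))

/-- Ceiling division of naturals: `cdiv a b = ⌈a/b⌉`. -/
def cdiv (a b : ℕ) : ℕ := (a + b - 1) / b


section Helpers
open Module LinearAlgebra.Projectivization
set_option synthInstance.maxHeartbeats 400000
namespace Stmt5X
variable {F : Type} [Field F] [Fintype F]
abbrev Pt (F : Type) [Field F] (k : ℕ) := Projectivization F (Fin k → F)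

lemma natcard_split {α : Type} [Finite α] (p : α → Prop) :
    Nat.card {a : α // p a} + Nat.card {a : α // ¬ p a} = Nat.card α := by
  classical
  rw [← Nat.card_sum]; exact Nat.card_congr (Equiv.sumCompl p)

lemma natcard_fd (V : Type) [AddCommGroup V] [Module F V] [FiniteDimensional F V] :
    Nat.card V = Fintype.card F ^ finrank F V := by
  have : Finite V := Module.finite_of_finite F
  have : Fintype V := Fintype.ofFinite V
  rw [Nat.card_eq_fintype_card]; exact card_eq_pow_finrank

lemma card_sub_notmem {k : ℕ} (A W : Submodule F (Fin k → F)) :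
    Nat.card {x : Fin k → F // x ∈ A ∧ x ∉ W}
      = Fintype.card F ^ finrank F A - Fintype.card F ^ finrank F ↥(A ⊓ W) := by
  have e1 : {y : A // (y : Fin k → F) ∈ W} ≃ (Submodule.comap A.subtype W) :=
    Equiv.subtypeEquivRight fun y => by simp [Submodule.mem_comap]
  have hrk : finrank F ↥(Submodule.comap A.subtype W) = finrank F ↥(A ⊓ W) := by
    rw [← Submodule.map_comap_subtype]
    exact (Submodule.equivMapOfInjective A.subtype A.injective_subtype
      (Submodule.comap A.subtype W)).finrank_eq
  have h1 : Nat.card {y : A // (y : Fin k → F) ∈ W}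
      = Fintype.card F ^ finrank F ↥(A ⊓ W) := by
    rw [Nat.card_congr e1, natcard_fd (F := F) ↥(Submodule.comap A.subtype W), hrk]
  have h2 := natcard_split (fun y : A => (y : Fin k → F) ∈ W)
  rw [h1, natcard_fd (F := F) A] at h2
  have e2 : {x : Fin k → F // x ∈ A ∧ x ∉ W} ≃ {y : A // ¬ ((y : Fin k → F) ∈ W)} :=
    (Equiv.subtypeSubtypeEquivSubtypeInter (· ∈ A) (· ∉ W)).symm
  rw [Nat.card_congr e2]
  omega

lemma card_scaling' {k : ℕ} (S : Set (Fin k → F)) (hS : ∀ (a : Fˣ) x, a • x ∈ S ↔ x ∈ S) :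
    Nat.card {Q : Pt F k // Q.rep ∈ S} * (Fintype.card F - 1)
      = Nat.card {x : Fin k → F // x ≠ 0 ∧ x ∈ S} := by
  have hg : Function.Bijective
      (fun qc : {Q : Pt F k // Q.rep ∈ S} × Fˣ =>
        (⟨(qc.2 : F) • qc.1.1.rep,
          smul_ne_zero qc.2.ne_zero qc.1.1.rep_nonzero,
          by rw [← Units.smul_def, hS]; exact qc.1.2⟩ :
          {x : Fin k → F // x ≠ 0 ∧ x ∈ S})) := by
    constructor
    · rintro ⟨⟨Q, hQ⟩, c⟩ ⟨⟨Q', hQ'⟩, c'⟩ h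
      simp only [Subtype.mk.injEq] at h
      have hQQ' : Q = Q' := by
        have h1 : Projectivization.mk F ((c : F) • Q.rep)
            (smul_ne_zero c.ne_zero Q.rep_nonzero) = Q := by
          have := (Projectivization.mk_eq_mk_iff F ((c : F) • Q.rep) Q.rep
            (smul_ne_zero c.ne_zero Q.rep_nonzero) Q.rep_nonzero).2 ⟨c, by rw [Units.smul_def]⟩
          rw [this, Projectivization.mk_rep]
        have h2 : Projectivization.mk F ((c' : F) • Q'.rep)
            (smul_ne_zero c'.ne_zero Q'.rep_nonzero) = Q' := by
          have := (Projectivization.mk_eq_mk_iff F ((c' : F) • Q'.rep) Q'.rep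
            (smul_ne_zero c'.ne_zero Q'.rep_nonzero) Q'.rep_nonzero).2 ⟨c', by rw [Units.smul_def]⟩
          rw [this, Projectivization.mk_rep]
        rw [← h1, ← h2]
        congr 1
      subst hQQ'
      have : ((c : F) - (c' : F)) • Q.rep = 0 := by
        rw [sub_smul, h, sub_self]
      rcases smul_eq_zero.1 this with h' | h'
      · have : (c : F) = c' := by linear_combination h'
        simp [Prod.ext_iff, Units.ext_iff, this]
      · exact absurd h' Q.rep_nonzero
    · rintro ⟨x, hx0, hxS⟩
      obtain ⟨a, ha⟩ := Projectivization.exists_smul_eq_mk_rep F x hx0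
      refine ⟨⟨⟨Projectivization.mk F x hx0, ?_⟩, a⁻¹⟩, ?_⟩
      · rw [← ha, hS]; exact hxS
      · apply Subtype.ext
        show ((a⁻¹ : Fˣ) : F) • (Projectivization.mk F x hx0).rep = x
        rw [← ha, ← Units.smul_def, inv_smul_smul]
  have := Nat.card_eq_of_bijective _ hg
  rw [Nat.card_prod, Nat.card_units, Nat.card_eq_fintype_card (α := F)] at this
  exact this


lemma card_lines {k : ℕ} (A W : Submodule F (Fin k → F)) :
    Nat.card {Q : Pt F k // Q.rep ∈ A ∧ Q.rep ∉ W} * (Fintype.card F - 1)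
      = Fintype.card F ^ finrank F A - Fintype.card F ^ finrank F ↥(A ⊓ W) := by
  have hS : ∀ (a : Fˣ) (x : Fin k → F),
      x ∈ {x : Fin k → F | x ∈ A ∧ x ∉ W} → a • x ∈ {x : Fin k → F | x ∈ A ∧ x ∉ W} := by
    rintro a x ⟨hA, hW⟩
    rw [Set.mem_setOf_eq, Units.smul_def]
    refine ⟨A.smul_mem _ hA, fun hmem => hW ?_⟩
    have := W.smul_mem ((a⁻¹ : Fˣ) : F) hmem
    rwa [smul_smul, Units.inv_mul, one_smul] at this
  have hS2 : ∀ (a : Fˣ) (x : Fin k → F),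
      a • x ∈ {x : Fin k → F | x ∈ A ∧ x ∉ W} ↔ x ∈ {x : Fin k → F | x ∈ A ∧ x ∉ W} := by
    intro a x
    constructor
    · intro h
      have := hS a⁻¹ _ h
      rwa [inv_smul_smul] at this
    · exact hS a x
  have h1 := card_scaling' {x : Fin k → F | x ∈ A ∧ x ∉ W} hS2
  have e : {x : Fin k → F // x ≠ 0 ∧ x ∈ {x : Fin k → F | x ∈ A ∧ x ∉ W}}
      ≃ {x : Fin k → F // x ∈ A ∧ x ∉ W} :=
    Equiv.subtypeEquivRight fun x => by
      simp only [Set.mem_setOf_eq, and_iff_right_iff_imp]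
      rintro ⟨-, hW⟩ rfl
      exact hW W.zero_mem
  have e2 : {Q : Pt F k // Q.rep ∈ {x : Fin k → F | x ∈ A ∧ x ∉ W}}
      ≃ {Q : Pt F k // Q.rep ∈ A ∧ Q.rep ∉ W} :=
    Equiv.subtypeEquivRight fun Q => Iff.rfl
  rw [← Nat.card_congr e2, h1, Nat.card_congr e, card_sub_notmem]


def Idx (F : Type) [Field F] (k t : ℕ) (U1 : Submodule F (Fin k → F)) : Type :=
  {p : Fin t × Pt F k // p.1.val ≠ 0 ∨ p.2.rep ∉ U1}

noncomputable instance (k : ℕ) : Finite (Pt F k) := by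
  unfold Pt Projectivization; infer_instance

instance (k t : ℕ) (U1 : Submodule F (Fin k → F)) : Finite (Idx F k t U1) := by
  unfold Idx; exact Subtype.finite

lemma card_idx_split {k t : ℕ} (ht : 1 ≤ t) (U1 : Submodule F (Fin k → F))
    (Pr : Pt F k → Prop) :
    Nat.card {i : Idx F k t U1 // Pr i.1.2} + Nat.card {Q : Pt F k // Pr Q ∧ Q.rep ∈ U1}
      = t * Nat.card {Q : Pt F k // Pr Q} := by
  classical
  set α := {p : Fin t × Pt F k // Pr p.2} with hα
  set cnd : α → Prop := fun a => a.1.1.val ≠ 0 ∨ a.1.2.rep ∉ U1 with hcnd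
  have E1 : α ≃ Fin t × {Q : Pt F k // Pr Q} :=
    { toFun := fun a => (a.1.1, ⟨a.1.2, a.2⟩)
      invFun := fun b => ⟨(b.1, b.2.1), b.2.2⟩
      left_inv := fun a => rfl
      right_inv := fun b => rfl }
  have E2 : {a : α // cnd a} ≃ {i : Idx F k t U1 // Pr i.1.2} :=
    { toFun := fun a => ⟨⟨a.1.1, a.2⟩, a.1.2⟩
      invFun := fun i => ⟨⟨i.1.1, i.2⟩, i.1.2⟩
      left_inv := fun a => rfl
      right_inv := fun i => rfl }
  have E3 : {a : α // ¬ cnd a} ≃ {Q : Pt F k // Pr Q ∧ Q.rep ∈ U1} :=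
    { toFun := fun a => ⟨a.1.1.2, a.1.2, not_not.1 (not_or.1 a.2).2⟩
      invFun := fun Q => ⟨⟨(⟨0, ht⟩, Q.1), Q.2.1⟩, by
        simp only [hcnd, not_or, not_not]
        exact ⟨trivial, Q.2.2⟩⟩
      left_inv := fun a => by
        have h0 : a.1.1.1 = (⟨0, ht⟩ : Fin t) := Fin.ext (not_not.1 (not_or.1 a.2).1)
        apply Subtype.ext; apply Subtype.ext
        exact Prod.ext h0.symm rfl
      right_inv := fun Q => rfl }
  have hsplit := natcard_split cnd
  rw [Nat.card_congr E2, Nat.card_congr E3, Nat.card_congr E1, Nat.card_prod,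
    Nat.card_eq_fintype_card (α := Fin t), Fintype.card_fin] at hsplit
  exact hsplit


lemma count_formula {k t : ℕ} (ht : 1 ≤ t) (U1 W : Submodule F (Fin k → F)) :
    Nat.card {i : Idx F k t U1 // i.1.2.rep ∉ W}
      = t * ((Fintype.card F ^ k - Fintype.card F ^ finrank F ↥W) / (Fintype.card F - 1))
        - (Fintype.card F ^ finrank F ↥U1 - Fintype.card F ^ finrank F ↥(U1 ⊓ W))
            / (Fintype.card F - 1) := by
  have hq1 : 1 < Fintype.card F := Fintype.one_lt_card
  have hsplit := card_idx_split (F := F) ht U1 (fun Q => Q.rep ∉ W)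
  have eAll : {Q : Pt F k // Q.rep ∉ W} ≃ {Q : Pt F k // Q.rep ∈ (⊤ : Submodule F (Fin k → F)) ∧ Q.rep ∉ W} :=
    Equiv.subtypeEquivRight fun Q => by simp
  have eU1 : {Q : Pt F k // Q.rep ∉ W ∧ Q.rep ∈ U1} ≃ {Q : Pt F k // Q.rep ∈ U1 ∧ Q.rep ∉ W} :=
    Equiv.subtypeEquivRight fun Q => and_comm
  have hAll := card_lines (F := F) (k := k) ⊤ W
  have hU1 := card_lines (F := F) (k := k) U1 W
  rw [Nat.card_congr eAll, Nat.card_congr eU1] at hsplit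
  rw [top_inf_eq, finrank_top, Module.finrank_pi, Fintype.card_fin] at hAll
  have hdiv1 : (Fintype.card F ^ k - Fintype.card F ^ finrank F ↥W) / (Fintype.card F - 1)
      = Nat.card {Q : Pt F k // Q.rep ∈ (⊤ : Submodule F (Fin k → F)) ∧ Q.rep ∉ W} :=
    (Nat.div_eq_of_eq_mul_left (by omega) hAll.symm)
  have hdiv2 : (Fintype.card F ^ finrank F ↥U1 - Fintype.card F ^ finrank F ↥(U1 ⊓ W))
        / (Fintype.card F - 1)
      = Nat.card {Q : Pt F k // Q.rep ∈ U1 ∧ Q.rep ∉ W} :=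
    (Nat.div_eq_of_eq_mul_left (by omega) hU1.symm)
  rw [hdiv1, hdiv2]
  omega


noncomputable def Phi (F : Type) [Field F] (k : ℕ) :
    (Fin k → F) ≃ₗ[F] Module.Dual F (Fin k → F) :=
  (LinearEquiv.piRing F F (Fin k) F).symm

lemma Phi_apply {k : ℕ} (x y : Fin k → F) : Phi F k x y = ∑ i, y i * x i := by
  simp [Phi, LinearEquiv.piRing_symm_apply, smul_eq_mul]

lemma Phi_comm {k : ℕ} (x y : Fin k → F) : Phi F k x y = Phi F k y x := by
  simp [Phi_apply, mul_comm]

noncomputable def dualW {k : ℕ} (M : Submodule F (Fin k → F)) : Submodule F (Fin k → F) :=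
  (M.map (Phi F k).toLinearMap).dualCoannihilator

lemma mem_dualW {k : ℕ} (M : Submodule F (Fin k → F)) (x : Fin k → F) :
    x ∈ dualW M ↔ ∀ m ∈ M, Phi F k m x = 0 := by
  rw [dualW, Submodule.mem_dualCoannihilator]
  constructor
  · intro h m hm
    exact h _ (Submodule.mem_map_of_mem hm)
  · rintro h f ⟨m, hm, rfl⟩
    exact h m hm

lemma finrank_dualW {k : ℕ} (M : Submodule F (Fin k → F)) :
    finrank F ↥(dualW M) = k - finrank F ↥M := by
  have h := Subspace.finrank_add_finrank_dualCoannihilator_eq (M.map (Phi F k).toLinearMap)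
  have h2 : finrank F ↥(M.map (Phi F k).toLinearMap) = finrank F ↥M :=
    (LinearEquiv.finrank_map_eq (Phi F k) M).symm ▸ rfl
  rw [Module.finrank_pi, Fintype.card_fin] at h
  rw [dualW]
  omega

lemma mem_dualW_span {k : ℕ} (m x : Fin k → F) :
    x ∈ dualW (Submodule.span F {m}) ↔ Phi F k m x = 0 := by
  rw [mem_dualW]
  constructor
  · intro h
    exact h m (Submodule.mem_span_singleton_self m)
  · intro h m' hm'
    obtain ⟨c, rfl⟩ := Submodule.mem_span_singleton.1 hm'
    rw [map_smul]
    simp [h]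

lemma pow_sub_div {a : ℕ} (ha : 1 ≤ a) :
    (Fintype.card F ^ a - Fintype.card F ^ (a - 1)) / (Fintype.card F - 1)
      = Fintype.card F ^ (a - 1) := by
  have hq1 : 1 < Fintype.card F := Fintype.one_lt_card
  apply Nat.div_eq_of_eq_mul_left (by omega)
  have h : Fintype.card F ^ a = Fintype.card F ^ (a - 1) * Fintype.card F := by
    rw [← pow_succ]; congr 1; omega
  rw [h, Nat.mul_sub, Nat.mul_one]

end Stmt5X
end Helpers

open Module LinearAlgebra.Projectivization Stmt5X in
/-- Corollary `2a`: the `s = 1` case of Theorem `xxd2` gives a code whose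
`r`-subcode support weight distribution has few nonzero entries. -/
theorem stmt_5 (q : ℕ) (F : Type) [Field F] [Fintype F] (hq : Fintype.card F = q)
    (k u1 t : ℕ) (hu1 : 1 ≤ u1) (hu1k : u1 < k) (ht : 1 ≤ t) :
    ∃ C : Submodule F (Fin (t * ((q ^ k - 1) / (q - 1)) - (q ^ u1 - 1) / (q - 1)) → F),
      Module.finrank F ↥C = k ∧
      minDist C = t * q ^ (k - 1) - q ^ (u1 - 1) ∧
      ∀ r, 1 ≤ r → r ≤ k →
        {j : ℕ | sswd C r j ≠ 0}.ncard ≤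
          min (u1 + 1) (min (r + 1) (min (k - r + 1) (k - u1 + 1))) := by
  subst hq
  classical
  set q := Fintype.card F with hqdef
  have hq1 : 1 < q := Fintype.one_lt_card
  have hk : 1 ≤ k := by omega
  set n := t * ((q ^ k - 1) / (q - 1)) - (q ^ u1 - 1) / (q - 1) with hn
  -- a subspace of dimension u1
  obtain ⟨U1, hU1rank⟩ : ∃ U1 : Submodule F (Fin k → F), finrank F ↥U1 = u1 := by
    refine ⟨Submodule.span F (Set.range ((Pi.basisFun F (Fin k)) ∘ Fin.castLE hu1k.le)), ?_⟩
    rw [finrank_span_eq_card ((Pi.basisFun F (Fin k)).linearIndependent.comp _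
      (Fin.castLE_injective hu1k.le)), Fintype.card_fin]
  have hU1netop : U1 ≠ ⊤ := by
    intro h
    rw [h, finrank_top, Module.finrank_pi, Fintype.card_fin] at hU1rank
    omega
  -- cardinality of index set
  have hIcard : Nat.card (Idx F k t U1) = n := by
    have h := count_formula (F := F) (k := k) (t := t) ht U1 ⊥
    have e : {i : Idx F k t U1 // i.1.2.rep ∉ (⊥ : Submodule F (Fin k → F))} ≃ Idx F k t U1 :=
      Equiv.subtypeUnivEquiv fun i => by
        simp [Submodule.mem_bot, i.1.2.rep_nonzero]
    rw [Nat.card_congr e, finrank_bot, inf_bot_eq, finrank_bot, pow_zero, hU1rank] at h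
    exact h
  set σ : Idx F k t U1 ≃ Fin n := Finite.equivFinOfCardEq hIcard with hσ
  set G : (Fin k → F) →ₗ[F] (Idx F k t U1 → F) :=
    LinearMap.pi (fun i => (Phi F k i.1.2.rep : (Fin k → F) →ₗ[F] F)) with hG
  set T : (Idx F k t U1 → F) ≃ₗ[F] (Fin n → F) := LinearEquiv.funCongrLeft F F σ.symm with hT
  set Gh : (Fin k → F) →ₗ[F] (Fin n → F) := T.toLinearMap ∘ₗ G with hGh
  have hGh_apply : ∀ (m : Fin k → F) (j : Fin n),
      Gh m j = Phi F k (σ.symm j).1.2.rep m := by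
    intro m j; rfl
  have hGinjG : ∀ m : Fin k → F, G m = 0 → m = 0 := by
    intro m hm
    have hvanish : ∀ x : Fin k → F, x ∉ U1 → Phi F k x m = 0 := by
      intro x hx
      have hx0 : x ≠ 0 := fun h => hx (h ▸ U1.zero_mem)
      obtain ⟨a, ha⟩ := Projectivization.exists_smul_eq_mk_rep F x hx0
      have hrepU1 : (Projectivization.mk F x hx0).rep ∉ U1 := by
        rw [← ha, Units.smul_def]
        intro hmem
        apply hx
        have := U1.smul_mem ((a⁻¹ : Fˣ) : F) hmem
        rwa [smul_smul, Units.inv_mul, one_smul] at this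
      have hGmi : G m ⟨(⟨0, ht⟩, Projectivization.mk F x hx0), Or.inr hrepU1⟩ = 0 := by
        rw [hm]; rfl
      have : Phi F k ((Projectivization.mk F x hx0).rep) m = 0 := hGmi
      rw [← ha, Units.smul_def, map_smul, LinearMap.smul_apply] at this
      rcases smul_eq_zero.1 this with h' | h'
      · exact absurd h' a.ne_zero
      · exact h'
    have hz : ∃ z : Fin k → F, z ∉ U1 := by
      by_contra hcon
      push_neg at hcon
      exact hU1netop (Submodule.eq_top_iff'.2 hcon)
    obtain ⟨z, hz⟩ := hz
    have hall : ∀ x : Fin k → F, Phi F k x m = 0 := by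
      intro x
      by_cases hx : x ∈ U1
      · have hxz : x + z ∉ U1 := fun h => hz (by simpa using U1.sub_mem h hx)
        have h1 := hvanish _ hxz
        have h2 := hvanish _ hz
        have h3 : Phi F k (x + z) m = Phi F k x m + Phi F k z m := by
          rw [map_add]; rfl
        rw [h1, h2, add_zero] at h3
        exact h3.symm
      · exact hvanish x hx
    funext i
    have h := hall (Pi.single i 1)
    rw [Phi_apply] at h
    simpa [Pi.single_apply] using h
  have hGinj : Function.Injective Gh := by
    have hGinj0 : Function.Injective G := by
      intro m m' hmm
      have : G (m - m') = 0 := by rw [map_sub, hmm, sub_self]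
      have := hGinjG _ this
      rwa [sub_eq_zero] at this
    exact T.injective.comp hGinj0
  set C := LinearMap.range Gh with hC
  -- support-weight count for subcodes
  have supp_eq : ∀ M : Submodule F (Fin k → F),
      Nat.card {j : Fin n // ∃ x ∈ Submodule.map Gh M, x j ≠ 0}
        = Nat.card {i : Idx F k t U1 // i.1.2.rep ∉ dualW M} := by
    intro M
    refine Nat.card_congr (Equiv.subtypeEquiv σ.symm fun j => ?_)
    rw [mem_dualW]
    push_neg
    constructor
    · rintro ⟨x, hx, hxj⟩
      obtain ⟨m, hm, rfl⟩ := Submodule.mem_map.1 hx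
      rw [hGh_apply] at hxj
      exact ⟨m, hm, by rwa [Phi_comm] at hxj⟩
    · rintro ⟨m, hm, hne⟩
      exact ⟨Gh m, Submodule.mem_map_of_mem hm, by rw [hGh_apply, Phi_comm]; exact hne⟩
  have hwt_eq : ∀ m : Fin k → F,
      hwt (Gh m)
        = Nat.card {i : Idx F k t U1 // i.1.2.rep ∉ dualW (Submodule.span F {m})} := by
    intro m
    refine Nat.card_congr (Equiv.subtypeEquiv σ.symm fun j => ?_)
    rw [mem_dualW_span, hGh_apply, Phi_comm]
  have hfinV : finrank F (Fin k → F) = k := by rw [Module.finrank_pi, Fintype.card_fin]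
  set d := t * q ^ (k - 1) - q ^ (u1 - 1) with hd
  have hval : ∀ m : Fin k → F, m ≠ 0 →
      (hwt (Gh m) = d ∨ hwt (Gh m) = t * q ^ (k - 1)) ∧
      (¬ U1 ≤ dualW (Submodule.span F {m}) → hwt (Gh m) = d) := by
    intro m hm
    rw [hwt_eq m]
    set W := dualW (Submodule.span F {m}) with hWdef
    have hWrank : finrank F ↥W = k - 1 := by
      rw [hWdef, finrank_dualW, finrank_span_singleton hm]
    have he_le : finrank F ↥(U1 ⊓ W) ≤ u1 := hU1rank ▸ Submodule.finrank_mono inf_le_left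
    have he_ge : u1 - 1 ≤ finrank F ↥(U1 ⊓ W) := by
      have hsum := Submodule.finrank_sup_add_finrank_inf_eq U1 W
      have hsup : finrank F ↥(U1 ⊔ W) ≤ k := by
        have h := Submodule.finrank_le (U1 ⊔ W)
        rwa [hfinV] at h
      omega
    have hcount := count_formula (F := F) (k := k) (t := t) ht U1 W
    rw [hWrank, hU1rank] at hcount
    rw [pow_sub_div hk] at hcount
    have hcases : finrank F ↥(U1 ⊓ W) = u1 - 1 ∨ finrank F ↥(U1 ⊓ W) = u1 := by omega
    constructor
    · rcases hcases with hce | hce <;> rw [hce] at hcount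
      · left; rw [hcount, pow_sub_div hu1]
      · right; rw [hcount, Nat.sub_self, Nat.zero_div, Nat.sub_zero]
    · intro hle
      have hlt : U1 ⊓ W < U1 := by
        rcases lt_or_eq_of_le (inf_le_left : U1 ⊓ W ≤ U1) with h | h
        · exact h
        · exact absurd (inf_eq_left.1 h) hle
      have := Submodule.finrank_lt_finrank_of_lt hlt
      rw [hU1rank] at this
      have hce : finrank F ↥(U1 ⊓ W) = u1 - 1 := by omega
      rw [hce] at hcount
      rw [hcount, pow_sub_div hu1]
  refine ⟨C, ?_, ?_, ?_⟩
  · rw [hC, LinearMap.finrank_range_of_inj hGinj, Module.finrank_pi, Fintype.card_fin]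
  · -- minimum distance
    have hmem : d ∈ {w | ∃ c ∈ C, c ≠ 0 ∧ hwt c = w} := by
      have hU1nebot : U1 ≠ ⊥ := by
        intro h
        rw [h, finrank_bot] at hU1rank
        omega
      obtain ⟨x0, hx0U, hx00⟩ := Submodule.ne_bot_iff U1 |>.1 hU1nebot
      have hj0 : ∃ j0, x0 j0 ≠ 0 := by
        by_contra hcon
        push_neg at hcon
        exact hx00 (funext hcon)
      obtain ⟨j0, hj0⟩ := hj0
      set m0 : Fin k → F := Pi.single j0 1 with hm0def
      have hm0 : m0 ≠ 0 := fun h => by simpa [hm0def] using congrFun h j0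
      have hnotle : ¬ U1 ≤ dualW (Submodule.span F {m0}) := by
        intro hle
        have := hle hx0U
        rw [mem_dualW_span, Phi_apply] at this
        rw [show (∑ i, x0 i * m0 i) = x0 j0 by
          simp [hm0def, Pi.single_apply, mul_ite]] at this
        exact hj0 this
      refine ⟨Gh m0, LinearMap.mem_range_self _ _, ?_, (hval m0 hm0).2 hnotle⟩
      intro h
      exact hm0 (hGinj (by rw [h, map_zero]))
    have hlb : ∀ w ∈ {w | ∃ c ∈ C, c ≠ 0 ∧ hwt c = w}, d ≤ w := by
      rintro w ⟨c, hc, hc0, rfl⟩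
      obtain ⟨m, rfl⟩ := hc
      have hm : m ≠ 0 := by
        rintro rfl
        exact hc0 (map_zero _)
      rcases (hval m hm).1 with h | h <;> rw [h]
      exact Nat.sub_le _ _
    exact le_antisymm (Nat.sInf_le hmem) (le_csInf ⟨d, hmem⟩ hlb)
  · intro r hr1 hrk
    set lo := u1 - r with hlo
    set hi := min u1 (k - r) with hhi
    set g : ℕ → ℕ := fun e =>
      t * ((q ^ k - q ^ (k - r)) / (q - 1)) - (q ^ u1 - q ^ e) / (q - 1) with hg
    have hsub : {j : ℕ | sswd C r j ≠ 0} ⊆ g '' Set.Icc lo hi := by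
      intro j hj
      have hne : Nonempty
          {U : Submodule F (Fin n → F) // U ≤ C ∧ finrank F ↥U = r ∧ suppWt U = j} :=
        (Nat.card_ne_zero.1 hj).1
      obtain ⟨⟨U, hUC, hUr, hUj⟩⟩ := hne
      set M := Submodule.comap Gh U with hM
      have hmap : Submodule.map Gh M = U := Submodule.map_comap_eq_self hUC
      have hMr : finrank F ↥M = r := by
        have h := (Submodule.equivMapOfInjective Gh hGinj M).finrank_eq
        rw [hmap] at h
        rw [h, hUr]
      have hWr : finrank F ↥(dualW M) = k - r := by rw [finrank_dualW, hMr]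
      set e := finrank F ↥(U1 ⊓ dualW M) with he
      have he_le1 : e ≤ u1 := hU1rank ▸ Submodule.finrank_mono inf_le_left
      have he_le2 : e ≤ k - r := hWr ▸ Submodule.finrank_mono inf_le_right
      have he_ge : u1 - r ≤ e := by
        have hsum := Submodule.finrank_sup_add_finrank_inf_eq U1 (dualW M)
        have hsup : finrank F ↥(U1 ⊔ dualW M) ≤ k := by
          have h := Submodule.finrank_le (U1 ⊔ dualW M)
          rwa [hfinV] at h
        omega
      have hjval : j = g e := by
        rw [← hUj]
        have h1 : suppWt U = Nat.card {jj : Fin n // ∃ x ∈ Submodule.map Gh M, x jj ≠ 0} := by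
          rw [hmap]; rfl
        rw [h1, supp_eq M, count_formula ht U1 (dualW M), hWr, hU1rank]
      exact ⟨e, ⟨he_ge, by omega⟩, hjval.symm⟩
    have hfin : (g '' Set.Icc lo hi).Finite := (Set.finite_Icc lo hi).image g
    have h1 : {j : ℕ | sswd C r j ≠ 0}.ncard ≤ (g '' Set.Icc lo hi).ncard :=
      Set.ncard_le_ncard hsub hfin
    have h2 : (g '' Set.Icc lo hi).ncard ≤ (Set.Icc lo hi).ncard :=
      Set.ncard_image_le (Set.finite_Icc lo hi)
    have h3 : (Set.Icc lo hi).ncard = hi + 1 - lo := by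
      rw [← Finset.coe_Icc, Set.ncard_coe_finset, Nat.card_Icc]
    omega
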